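/- Assume Axioms A3 and A4 hold with uniform convergence on compact sets, and assume that for every x ∈ X the function d^x is a nondegenerate distance (d^x(v, w) = 0 implies v = w). Then for each x, u the map Δ^x(u, ·) is invertible; denoting its inverse by Σ^x(u, ·), one has Σ_ε^x(u, v) → Σ^x(u, v) as ε → 0+, uniformly with respect to x, u, v in compact sets, and each Σ^x(u, ·) is a d^x-isometry: d^x(Σ^x(u, v), Σ^x(u, w)) = d^x(v, w) for all v, w. -/

import Mathlib

open Filter Topology Set

/-- A uniform-on-compacts limit (along a filter where all fibers are continuous)
of continuous functions is continuous, on a locally compact space. -/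
lemma aux_cont {α β : Type*} [TopologicalSpace α] [LocallyCompactSpace α] [MetricSpace β]
    (G : ℝ → α → β) (g : α → β)
    (hu : ∀ K : Set α, IsCompact K → TendstoUniformlyOn G g (𝓝[>] (0 : ℝ)) K)
    (hGc : ∀ ε : ℝ, 0 < ε → Continuous (G ε)) : Continuous g := by
  rw [continuous_iff_continuousAt]
  intro p
  obtain ⟨K, hKc, hKn⟩ := exists_compact_mem_nhds p
  have hco : ContinuousOn g K := by
    refine (hu K hKc).continuousOn (Filter.Eventually.frequently ?_)
    filter_upwards [self_mem_nhdsWithin] with ε hε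
    exact (hGc ε hε).continuousOn
  exact hco.continuousAt hKn

/-- Moving-point limits: if `G ε → g` uniformly on all compacts and `g` is
continuous, then `G ε (p ε) → g p₀` whenever `p ε → p₀`. -/
lemma aux_tendsto_comp {α β : Type*} [TopologicalSpace α] [LocallyCompactSpace α] [MetricSpace β]
    {l : Filter ℝ} (G : ℝ → α → β) (g : α → β)
    (hu : ∀ K : Set α, IsCompact K → TendstoUniformlyOn G g l K)
    (hg : Continuous g) {p : ℝ → α} {p₀ : α} (hp : Tendsto p l (𝓝 p₀)) :
    Tendsto (fun ε => G ε (p ε)) l (𝓝 (g p₀)) := by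
  obtain ⟨K, hKc, hKn⟩ := exists_compact_mem_nhds p₀
  have hmem : ∀ᶠ ε in l, p ε ∈ K := hp hKn
  exact (hu K hKc).tendsto_comp (hg.continuousWithinAt)
    (tendsto_nhdsWithin_iff.mpr ⟨hp, hmem⟩)

/-- Composition of a uniform-on-compacts limit with a uniformly convergent family
of "inner" maps. -/
lemma aux_unif_comp {α β γ : Type*} [TopologicalSpace α] [MetricSpace β] [MetricSpace γ]
    [LocallyCompactSpace β] {l : Filter ℝ}
    (F : ℝ → β → γ) (f : β → γ)
    (hF : ∀ C : Set β, IsCompact C → TendstoUniformlyOn F f l C)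
    (hf : Continuous f)
    (φ : ℝ → α → β) (ψ : α → β) {K : Set α} (hK : IsCompact K)
    (hψ : ContinuousOn ψ K)
    (hφ : TendstoUniformlyOn φ ψ l K) :
    TendstoUniformlyOn (fun ε p => F ε (φ ε p)) (fun p => f (ψ p)) l K := by
  have hL : IsCompact (ψ '' K) := hK.image_of_continuousOn hψ
  obtain ⟨L', hL'c, hL'sub⟩ := exists_compact_superset hL
  obtain ⟨r, hr, hrsub⟩ := hL.exists_thickening_subset_open isOpen_interior hL'sub
  have hUC : UniformContinuousOn f L' :=
    hL'c.uniformContinuousOn_of_continuous hf.continuousOn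
  rw [Metric.tendstoUniformlyOn_iff] at hφ ⊢
  intro η hη
  obtain ⟨δ', hδ', hδ'P⟩ := Metric.uniformContinuousOn_iff.mp hUC (η / 2) (by positivity)
  have h1 := hF L' hL'c
  rw [Metric.tendstoUniformlyOn_iff] at h1
  filter_upwards [hφ (min r δ') (lt_min hr hδ'), h1 (η / 2) (by positivity)] with ε h2 h3
  intro p hp
  have hmem : φ ε p ∈ L' := by
    have hth : φ ε p ∈ Metric.thickening r (ψ '' K) := by
      refine Metric.mem_thickening_iff.mpr ⟨ψ p, ⟨p, hp, rfl⟩, ?_⟩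
      rw [dist_comm]
      exact (h2 p hp).trans_le (min_le_left _ _)
    exact interior_subset (hrsub hth)
  have hmemψ : ψ p ∈ L' := interior_subset (hL'sub ⟨p, hp, rfl⟩)
  calc dist (f (ψ p)) (F ε (φ ε p))
      ≤ dist (f (ψ p)) (f (φ ε p)) + dist (f (φ ε p)) (F ε (φ ε p)) := dist_triangle _ _ _
    _ < η / 2 + η / 2 := by
        refine add_lt_add ?_ (h3 (φ ε p) hmem)
        exact hδ'P (ψ p) hmemψ (φ ε p) hmem ((h2 p hp).trans_le (min_le_right _ _))
    _ = η := add_halves η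

/-- If moreover every `d^x` is nondegenerate, then each `Δ^x(u, ·)`
is invertible; its inverse `Σ^x(u, ·)` is the limit of `Σ_ε^x(u, ·)` as ε → 0+,
uniformly on compact sets, and each `Σ^x(u, ·)` is a `d^x`-isometry. -/
theorem sum_limit_exists_and_is_isometry
    {X : Type*} [MetricSpace X] [CompleteSpace X] [LocallyCompactSpace X]
    (δ : ℝ → X → X → X)
    (hcomp : ∀ ε μ : ℝ, 0 < ε → 0 < μ → ∀ x y : X, δ ε x (δ μ x y) = δ (ε * μ) x y)
    (hone : ∀ x y : X, δ 1 x y = y)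
    (hfix : ∀ ε : ℝ, 0 < ε → ∀ x : X, δ ε x x = x)
    (hcont : ContinuousOn (fun p : ℝ × X × X => δ p.1 p.2.1 p.2.2) {p | 0 < p.1})
    (hlim0 : ∀ x y : X, Tendsto (fun ε : ℝ => δ ε x y) (𝓝[>] (0 : ℝ)) (𝓝 x))
    (dx : X → X → X → ℝ)
    (hA3 : ∀ K : Set (X × X × X), IsCompact K →
      TendstoUniformlyOn
        (fun (ε : ℝ) (p : X × X × X) => (1 / ε) * dist (δ ε p.1 p.2.1) (δ ε p.1 p.2.2))
        (fun p => dx p.1 p.2.1 p.2.2) (𝓝[>] (0 : ℝ)) K)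
    (ΔL : X → X → X → X)
    (hA4 : ∀ K : Set (X × X × X), IsCompact K →
      TendstoUniformlyOn
        (fun (ε : ℝ) (p : X × X × X) => δ ε⁻¹ (δ ε p.1 p.2.1) (δ ε p.1 p.2.2))
        (fun p => ΔL p.1 p.2.1 p.2.2) (𝓝[>] (0 : ℝ)) K)
    (hnd : ∀ x v w : X, dx x v w = 0 → v = w) :
    ∃ SigL : X → X → X → X,
      (∀ x u v : X, ΔL x u (SigL x u v) = v ∧ SigL x u (ΔL x u v) = v) ∧
      (∀ K : Set (X × X × X), IsCompact K →
        TendstoUniformlyOn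
          (fun (ε : ℝ) (p : X × X × X) => δ ε⁻¹ p.1 (δ ε (δ ε p.1 p.2.1) p.2.2))
          (fun p => SigL p.1 p.2.1 p.2.2) (𝓝[>] (0 : ℝ)) K) ∧
      (∀ x u v w : X, dx x (SigL x u v) (SigL x u w) = dx x v w) := by
  have hpos : ∀ᶠ ε : ℝ in 𝓝[>] (0 : ℝ), 0 < ε := self_mem_nhdsWithin
  -- continuity of the dilations for fixed ε > 0
  have hδc : ∀ ε : ℝ, 0 < ε → Continuous (fun q : X × X => δ ε q.1 q.2) := by
    intro ε hε
    rw [continuous_iff_continuousAt]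
    intro q
    have hopen : IsOpen {p : ℝ × X × X | 0 < p.1} :=
      isOpen_lt continuous_const continuous_fst
    have h1 : ContinuousAt (fun p : ℝ × X × X => δ p.1 p.2.1 p.2.2) (ε, q) :=
      hcont.continuousAt (hopen.mem_nhds hε)
    exact h1.comp ((continuous_const.prodMk continuous_id).continuousAt)
  -- continuity of the various approximants for fixed ε > 0
  have hA3c : ∀ ε : ℝ, 0 < ε →
      Continuous (fun p : X × X × X => (1 / ε) * dist (δ ε p.1 p.2.1) (δ ε p.1 p.2.2)) := by
    intro ε hε
    have h := hδc ε hε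
    exact continuous_const.mul
      (Continuous.dist (h.comp (continuous_fst.prodMk continuous_snd.fst))
        (h.comp (continuous_fst.prodMk continuous_snd.snd)))
  have hA4c : ∀ ε : ℝ, 0 < ε →
      Continuous (fun p : X × X × X => δ ε⁻¹ (δ ε p.1 p.2.1) (δ ε p.1 p.2.2)) := by
    intro ε hε
    have h := hδc ε hε
    have hinv := hδc ε⁻¹ (inv_pos.mpr hε)
    exact hinv.comp ((h.comp (continuous_fst.prodMk continuous_snd.fst)).prodMk
      (h.comp (continuous_fst.prodMk continuous_snd.snd)))
  -- continuity of the limits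
  have hdxc : Continuous (fun p : X × X × X => dx p.1 p.2.1 p.2.2) :=
    aux_cont _ _ hA3 hA3c
  have hΔc : Continuous (fun p : X × X × X => ΔL p.1 p.2.1 p.2.2) :=
    aux_cont _ _ hA4 hA4c
  -- the candidate inverse
  set SigL : X → X → X → X := fun x u v => ΔL x (ΔL x u x) v with hSigL
  have hac : Continuous (fun p : X × X × X => ΔL p.1 p.2.1 p.1) :=
    hΔc.comp (continuous_fst.prodMk (continuous_snd.fst.prodMk continuous_fst))
  have hSc : Continuous (fun p : X × X × X => SigL p.1 p.2.1 p.2.2) :=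
    hΔc.comp (continuous_fst.prodMk (hac.prodMk continuous_snd.snd))
  -- the main uniform convergence statement
  have hSunif : ∀ K : Set (X × X × X), IsCompact K →
      TendstoUniformlyOn (fun (ε : ℝ) (p : X × X × X) => δ ε⁻¹ p.1 (δ ε (δ ε p.1 p.2.1) p.2.2))
        (fun p => SigL p.1 p.2.1 p.2.2) (𝓝[>] (0 : ℝ)) K := by
    intro K hK
    have hmc : Continuous (fun p : X × X × X => ((p.1, p.2.1, p.1) : X × X × X)) :=
      continuous_fst.prodMk (continuous_snd.fst.prodMk continuous_fst)
    have hC : IsCompact ((fun p : X × X × X => ((p.1, p.2.1, p.1) : X × X × X)) '' K) :=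
      hK.image hmc
    -- uniform convergence of `δ ε x u → x` on K
    have hY : ∀ η > (0 : ℝ), ∀ᶠ ε in 𝓝[>] (0 : ℝ), ∀ p ∈ K,
        dist p.1 (δ ε p.1 p.2.1) < η := by
      intro η hη
      obtain ⟨M, hM⟩ := hC.exists_bound_of_continuousOn hdxc.continuousOn
      set B : ℝ := max M 0 + 1 with hB
      have hBpos : (0 : ℝ) < B := by positivity
      have h3 := hA3 _ hC
      rw [Metric.tendstoUniformlyOn_iff] at h3
      have hIoo : Ioo (0 : ℝ) (η / B) ∈ 𝓝[>] (0 : ℝ) :=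
        Ioo_mem_nhdsGT (div_pos hη hBpos)
      filter_upwards [h3 1 one_pos, hIoo] with ε h1 h2
      intro p hp
      have hε : 0 < ε := h2.1
      have hq := h1 (p.1, p.2.1, p.1) ⟨p, hp, rfl⟩
      simp only [hfix ε hε p.1] at hq
      rw [Real.dist_eq] at hq
      have hb : (1 / ε) * dist (δ ε p.1 p.2.1) p.1 < B := by
        have h5 : (1 / ε) * dist (δ ε p.1 p.2.1) p.1 - dx p.1 p.2.1 p.1 < 1 := by
          have := abs_lt.mp hq
          linarith [this.1]
        have h6 : dx p.1 p.2.1 p.1 ≤ max M 0 :=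
          le_trans (le_abs_self _) (le_trans (by
            simpa [Real.norm_eq_abs] using hM (p.1, p.2.1, p.1) ⟨p, hp, rfl⟩)
            (le_max_left _ _))
        linarith
      have hDε : dist (δ ε p.1 p.2.1) p.1 = ε * ((1 / ε) * dist (δ ε p.1 p.2.1) p.1) := by
        field_simp
      rw [dist_comm, hDε]
      calc ε * ((1 / ε) * dist (δ ε p.1 p.2.1) p.1) ≤ ε * B := by
            refine mul_le_mul_of_nonneg_left hb.le hε.le
        _ < (η / B) * B := mul_lt_mul_of_pos_right h2.2 hBpos
        _ = η := div_mul_cancel₀ η hBpos.ne'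
    -- uniform convergence of `Δ_ε^x(u,x) → ΔL x u x` on K
    have hA : ∀ η > (0 : ℝ), ∀ᶠ ε in 𝓝[>] (0 : ℝ), ∀ p ∈ K,
        dist (ΔL p.1 p.2.1 p.1) (δ ε⁻¹ (δ ε p.1 p.2.1) p.1) < η := by
      intro η hη
      have h4 := hA4 _ hC
      rw [Metric.tendstoUniformlyOn_iff] at h4
      filter_upwards [h4 η hη, hpos] with ε h1 hε
      intro p hp
      have := h1 (p.1, p.2.1, p.1) ⟨p, hp, rfl⟩
      simpa [hfix ε hε p.1] using this
    -- the combined inner map converges uniformly on K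
    have hφ : TendstoUniformlyOn
        (fun (ε : ℝ) (p : X × X × X) =>
          ((δ ε p.1 p.2.1, δ ε⁻¹ (δ ε p.1 p.2.1) p.1, p.2.2) : X × X × X))
        (fun p => ((p.1, ΔL p.1 p.2.1 p.1, p.2.2) : X × X × X)) (𝓝[>] (0 : ℝ)) K := by
      rw [Metric.tendstoUniformlyOn_iff]
      intro η hη
      filter_upwards [hY η hη, hA η hη] with ε h1 h2
      intro p hp
      simp only [Prod.dist_eq, dist_self]
      exact max_lt (h1 p hp) (max_lt (h2 p hp) hη)
    have hψc : ContinuousOn (fun p : X × X × X => ((p.1, ΔL p.1 p.2.1 p.1, p.2.2) : X × X × X)) K :=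
      (continuous_fst.prodMk (hac.prodMk continuous_snd.snd)).continuousOn
    have main := aux_unif_comp
      (fun (ε : ℝ) (q : X × X × X) => δ ε⁻¹ (δ ε q.1 q.2.1) (δ ε q.1 q.2.2))
      (fun q => ΔL q.1 q.2.1 q.2.2) hA4 hΔc
      (fun (ε : ℝ) (p : X × X × X) =>
        ((δ ε p.1 p.2.1, δ ε⁻¹ (δ ε p.1 p.2.1) p.1, p.2.2) : X × X × X))
      (fun p => ((p.1, ΔL p.1 p.2.1 p.1, p.2.2) : X × X × X)) hK hψc hφ
    refine main.congr ?_
    filter_upwards [hpos] with ε hε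
    intro p hp
    show δ ε⁻¹ (δ ε (δ ε p.1 p.2.1) (δ ε⁻¹ (δ ε p.1 p.2.1) p.1)) (δ ε (δ ε p.1 p.2.1) p.2.2)
        = δ ε⁻¹ p.1 (δ ε (δ ε p.1 p.2.1) p.2.2)
    rw [hcomp ε ε⁻¹ hε (inv_pos.mpr hε), mul_inv_cancel₀ hε.ne', hone]
  -- pointwise limits
  have hSpt : ∀ x u v : X, Tendsto (fun ε : ℝ => δ ε⁻¹ x (δ ε (δ ε x u) v)) (𝓝[>] (0 : ℝ))
      (𝓝 (SigL x u v)) := by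
    intro x u v
    have := hSunif {((x, u, v) : X × X × X)} isCompact_singleton
    rwa [tendstoUniformlyOn_singleton_iff_tendsto] at this
  have hΔpt : ∀ x u v : X, Tendsto (fun ε : ℝ => δ ε⁻¹ (δ ε x u) (δ ε x v)) (𝓝[>] (0 : ℝ))
      (𝓝 (ΔL x u v)) := by
    intro x u v
    have := hA4 {((x, u, v) : X × X × X)} isCompact_singleton
    rwa [tendstoUniformlyOn_singleton_iff_tendsto] at this
  -- (1) ΔL x u (SigL x u v) = v
  have hinv1 : ∀ x u v : X, ΔL x u (SigL x u v) = v := by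
    intro x u v
    have hp : Tendsto (fun ε : ℝ => ((x, u, δ ε⁻¹ x (δ ε (δ ε x u) v)) : X × X × X))
        (𝓝[>] (0 : ℝ)) (𝓝 ((x, u, SigL x u v) : X × X × X)) :=
      tendsto_const_nhds.prodMk_nhds (tendsto_const_nhds.prodMk_nhds (hSpt x u v))
    have hlimΔ := aux_tendsto_comp _ _ hA4 hΔc hp
    have heq : (fun ε : ℝ =>
        δ ε⁻¹ (δ ε x u) (δ ε x (δ ε⁻¹ x (δ ε (δ ε x u) v)))) =ᶠ[𝓝[>] (0 : ℝ)]
        (fun _ => v) := by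
      filter_upwards [hpos] with ε hε
      have hεi : 0 < ε⁻¹ := inv_pos.mpr hε
      rw [hcomp ε ε⁻¹ hε hεi, mul_inv_cancel₀ hε.ne', hone,
        hcomp ε⁻¹ ε hεi hε, inv_mul_cancel₀ hε.ne', hone]
    exact tendsto_nhds_unique (hlimΔ.congr' heq) tendsto_const_nhds
  -- (2) SigL x u (ΔL x u v) = v
  have hinv2 : ∀ x u v : X, SigL x u (ΔL x u v) = v := by
    intro x u v
    have hp : Tendsto (fun ε : ℝ => ((x, u, δ ε⁻¹ (δ ε x u) (δ ε x v)) : X × X × X))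
        (𝓝[>] (0 : ℝ)) (𝓝 ((x, u, ΔL x u v) : X × X × X)) :=
      tendsto_const_nhds.prodMk_nhds (tendsto_const_nhds.prodMk_nhds (hΔpt x u v))
    have hlimS := aux_tendsto_comp _ _ hSunif hSc hp
    have heq : (fun ε : ℝ =>
        δ ε⁻¹ x (δ ε (δ ε x u) (δ ε⁻¹ (δ ε x u) (δ ε x v)))) =ᶠ[𝓝[>] (0 : ℝ)]
        (fun _ => v) := by
      filter_upwards [hpos] with ε hε
      have hεi : 0 < ε⁻¹ := inv_pos.mpr hε
      rw [hcomp ε ε⁻¹ hε hεi, mul_inv_cancel₀ hε.ne', hone,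
        hcomp ε⁻¹ ε hεi hε, inv_mul_cancel₀ hε.ne', hone]
    exact tendsto_nhds_unique (hlimS.congr' heq) tendsto_const_nhds
  -- (3) each ΔL x a (·) is a dx-isometry
  have hiso : ∀ x a v w : X, dx x (ΔL x a v) (ΔL x a w) = dx x v w := by
    intro x a v w
    have hp : Tendsto (fun ε : ℝ =>
        ((δ ε x a, δ ε⁻¹ (δ ε x a) (δ ε x v), δ ε⁻¹ (δ ε x a) (δ ε x w)) : X × X × X))
        (𝓝[>] (0 : ℝ)) (𝓝 ((x, ΔL x a v, ΔL x a w) : X × X × X)) :=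
      (hlim0 x a).prodMk_nhds ((hΔpt x a v).prodMk_nhds (hΔpt x a w))
    have t1 := aux_tendsto_comp _ _ hA3 hdxc hp
    have t2 := aux_tendsto_comp _ _ hA3 hdxc
      (tendsto_const_nhds :
        Tendsto (fun _ : ℝ => ((x, v, w) : X × X × X)) (𝓝[>] (0 : ℝ)) (𝓝 (x, v, w)))
    have heq : (fun ε : ℝ => (1 / ε) *
        dist (δ ε (δ ε x a) (δ ε⁻¹ (δ ε x a) (δ ε x v)))
             (δ ε (δ ε x a) (δ ε⁻¹ (δ ε x a) (δ ε x w)))) =ᶠ[𝓝[>] (0 : ℝ)]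
        (fun ε : ℝ => (1 / ε) * dist (δ ε x v) (δ ε x w)) := by
      filter_upwards [hpos] with ε hε
      have hεi : 0 < ε⁻¹ := inv_pos.mpr hε
      rw [hcomp ε ε⁻¹ hε hεi, mul_inv_cancel₀ hε.ne', hone,
        hcomp ε ε⁻¹ hε hεi, mul_inv_cancel₀ hε.ne', hone]
    exact tendsto_nhds_unique (t1.congr' heq) t2
  exact ⟨SigL, fun x u v => ⟨hinv1 x u v, hinv2 x u v⟩, hSunif,
    fun x u v w => hiso x (ΔL x u x) v w⟩
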